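/- For r ≥ 3, one has ‖B(u)‖_{V'+L^{(r+1)/r}} ≤ ‖u‖_{L^{r+1}}^{(r+1)/(r-1)} ‖u‖_{L²}^{(r-3)/(r-1)} for all u ∈ V ∩ L^{r+1}, where B(u) = P((u·∇)u). -/

import Mathlib

open MeasureTheory Real
noncomputable section

/-- Euclidean 3-space, used both as the periodic box parametrization and target. -/
abbrev E3 := EuclideanSpace ℝ (Fin 3)

/-- The fundamental domain `[0,L]³` of the torus `T³`. -/
def box (L : ℝ) : Set E3 := {x | ∀ i, x i ∈ Set.Icc (0 : ℝ) L}

/-- The standard basis vector `e_i`. -/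
def e3 (i : Fin 3) : E3 := EuclideanSpace.single i 1

/-- `u` is `L`-periodic in each coordinate direction. -/
def Periodic3 (L : ℝ) {α : Type*} (u : E3 → α) : Prop :=
  ∀ (x : E3) (i : Fin 3), u (x + L • e3 i) = u x

/-- `|∇u|² = Σ_{i,j} (∂u_j/∂x_i)²`. -/
def gradNormSq (u : E3 → E3) (x : E3) : ℝ :=
  ∑ i, ∑ j, (fderiv ℝ u x (e3 i) j) ^ 2

/-- `|∇f|²` for a scalar function. -/
def gradNormSqScalar (f : E3 → ℝ) (x : E3) : ℝ :=
  ∑ i, (fderiv ℝ f x (e3 i)) ^ 2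

/-- `u` is divergence free. -/
def divFree (u : E3 → E3) : Prop := ∀ x, ∑ i, fderiv ℝ u x (e3 i) i = 0

/-- The Laplacian `Δu`. -/
def lap (u : E3 → E3) (x : E3) : E3 :=
  ∑ i, fderiv ℝ (fun y => fderiv ℝ u y (e3 i)) x (e3 i)

/-- The Navier–Stokes trilinear form `b(u,v,w) = ∫ (u·∇)v·w`. -/
def triB (L : ℝ) (u v w : E3 → E3) : ℝ :=
  ∫ x in box L, ∑ i, ∑ j, u x i * fderiv ℝ v x (e3 i) j * w x j

/-- The `L^p` norm over the fundamental domain (for a real exponent `p`). -/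
def LpNorm (L p : ℝ) (u : E3 → E3) : ℝ := (∫ x in box L, ‖u x‖ ^ p) ^ (1 / p)

/-- The square of the `V`-norm, `‖u‖_V² = ∫ |∇u|²`. -/
def VnormSq (L : ℝ) (u : E3 → E3) : ℝ := ∫ x in box L, gradNormSq u x

/-- The `V`-norm `‖u‖_V = ‖∇u‖_{L²}`. -/
def Vnorm (L : ℝ) (u : E3 → E3) : ℝ := Real.sqrt (VnormSq L u)

namespace Stmt17Aux
open Set

abbrev Pi3 := Fin 3 → ℝ

def κ : Pi3 ≃L[ℝ] E3 := (EuclideanSpace.equiv (Fin 3) ℝ).symm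

lemma kappa_single (i : Fin 3) (c : ℝ) : κ (Pi.single i c) = c • e3 i := by
  have h : (Pi.single i c : Pi3) = c • (Pi.single i (1:ℝ) : Pi3) := by
    funext j
    by_cases hj : j = i
    · subst hj; simp
    · simp [Pi.single_eq_of_ne hj]
  rw [h, _root_.map_smul]
  rfl

lemma hone : (1 : WithTop ℕ∞) ≤ ((⊤ : ℕ∞) : WithTop ℕ∞) := by exact_mod_cast le_top

lemma box_preimage (L : ℝ) :
    ((MeasurableEquiv.toLp 2 (Fin 3 → ℝ)).symm) ⁻¹' (Icc (0 : Pi3) (fun _ => L)) = box L := by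
  ext x
  constructor
  · intro hx i; exact ⟨hx.1 i, hx.2 i⟩
  · intro hx; exact ⟨fun i => (hx i).1, fun i => (hx i).2⟩

lemma box_image (L : ℝ) : box L = κ '' (Icc (0 : Pi3) (fun _ => L)) := by
  rw [← box_preimage L]
  ext x
  constructor
  · intro hx; exact ⟨((MeasurableEquiv.toLp 2 (Fin 3 → ℝ)).symm) x, hx, rfl⟩
  · rintro ⟨y, hy, rfl⟩; exact hy

lemma isCompact_box (L : ℝ) : IsCompact (box L) := by
  rw [box_image]
  exact isCompact_Icc.image κ.continuous

lemma measurableSet_box (L : ℝ) : MeasurableSet (box L) :=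
  (isCompact_box L).isClosed.measurableSet

lemma finiteRestrict (L : ℝ) : IsFiniteMeasure (volume.restrict (box L)) :=
  ⟨by rw [Measure.restrict_apply_univ]; exact (isCompact_box L).measure_lt_top⟩

lemma memLp_box (L : ℝ) {f : E3 → ℝ} (hf : Continuous f) (p : ENNReal) :
    MemLp f p (volume.restrict (box L)) := by
  haveI := finiteRestrict L
  obtain ⟨C, hC⟩ := (isCompact_box L).exists_bound_of_continuousOn hf.continuousOn
  exact MemLp.of_bound hf.aestronglyMeasurable C
    ((ae_restrict_iff' (measurableSet_box L)).2 (Filter.Eventually.of_forall hC))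

lemma integrableOn_box (L : ℝ) {f : E3 → ℝ} (hf : Continuous f) :
    IntegrableOn f (box L) :=
  ContinuousOn.integrableOn_compact (isCompact_box L) hf.continuousOn

lemma setIntegral_box (L : ℝ) (f : E3 → ℝ) :
    ∫ x in box L, f x = ∫ y in Icc (0 : Pi3) (fun _ => L), f (κ y) := by
  have h := (EuclideanSpace.volume_preserving_symm_measurableEquiv_toLp (Fin 3)).setIntegral_preimage_emb
      ((MeasurableEquiv.toLp 2 (Fin 3 → ℝ)).symm).measurableEmbedding
      (fun y => f (κ y)) (Icc (0 : Pi3) (fun _ => L))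
  rw [box_preimage L] at h
  exact h


open Set

/-- Integral of a partial derivative of a smooth function, periodic in direction `i`,
over the box vanishes. -/
lemma integral_pderiv_zero (L : ℝ) (hL : 0 < L) (f : E3 → ℝ)
    (hf : ContDiff ℝ (⊤ : ℕ∞) f) (i : Fin 3)
    (hfp : ∀ x, f (x + L • e3 i) = f x) :
    ∫ x in box L, fderiv ℝ f x (e3 i) = 0 := by
  classical
  set D : Pi3 → (Pi3 →L[ℝ] ℝ) :=
    fun y => (fderiv ℝ f (κ y)).comp (κ : Pi3 →L[ℝ] E3) with hD
  have hdf : Differentiable ℝ f := hf.differentiable (ENat.one_le_iff_ne_zero_withTop.mp hone)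
  have hderiv : ∀ y : Pi3, HasFDerivAt (fun z : Pi3 => f (κ z)) (D y) y := fun y =>
    ((hdf (κ y)).hasFDerivAt.comp y κ.hasFDerivAt)
  have hDcont : Continuous (fun y : Pi3 => D y (Pi.single i 1)) := by
    have h1 : Continuous fun y : Pi3 => fderiv ℝ f (κ y) :=
      (hf.continuous_fderiv (ENat.one_le_iff_ne_zero_withTop.mp hone)).comp κ.continuous
    simpa [hD] using h1.clm_apply (continuous_const (y := κ (Pi.single i 1)))
  set a : Pi3 := 0 with ha
  set b : Pi3 := fun _ => L with hb
  have hab : a ≤ b := fun j => le_of_lt hL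
  set F : Fin 3 → Pi3 → ℝ := fun j y => if j = i then f (κ y) else 0 with hF
  set F' : Fin 3 → Pi3 → Pi3 →L[ℝ] ℝ := fun j y => if j = i then D y else 0 with hF'
  have hsum : ∀ y : Pi3, (∑ j, F' j y (Pi.single j 1)) = D y (Pi.single i 1) := by
    intro y
    rw [show (∑ j, F' j y (Pi.single j 1)) =
        ∑ j, if j = i then D y (Pi.single j 1) else 0 from
      Finset.sum_congr rfl fun j _ => by by_cases hj : j = i <;> simp [hF', hj]]
    simp
  have key := integral_divergence_of_hasFDerivAt_off_countable' (n := 2) a b hab F F'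
      ∅ countable_empty
      (fun j => by
        by_cases hj : j = i
        · subst hj; simpa [hF] using ((hf.continuous.comp' κ.continuous).continuousOn)
        · simpa [hF, hj] using (continuousOn_const (c := (0:ℝ))))
      (fun x _ j => by
        by_cases hj : j = i
        · subst hj; simpa [hF, hF'] using hderiv x
        · simpa [hF, hF', hj] using hasFDerivAt_const (0:ℝ) x)
      (by
        apply (ContinuousOn.integrableOn_compact isCompact_Icc
          (Continuous.continuousOn ?_))
        have : (fun x : Pi3 => ∑ j, F' j x (Pi.single j 1)) =
            fun x : Pi3 => D x (Pi.single i 1) := funext fun x => hsum x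
        rw [this]; exact hDcont)
  -- RHS of the divergence theorem vanishes
  have hrhs : ∀ j : Fin 3,
      ((∫ x in Icc (a ∘ j.succAbove) (b ∘ j.succAbove), F j (j.insertNth (b j) x)) -
       ∫ x in Icc (a ∘ j.succAbove) (b ∘ j.succAbove), F j (j.insertNth (a j) x)) = 0 := by
    intro j
    by_cases hj : j = i
    · subst hj
      have hins : ∀ x : Fin 2 → ℝ,
          (j.insertNth (b j) x : Pi3) = j.insertNth (a j) x + Pi.single j L := by
        intro x
        have h0 : (j.insertNth L (0 : ∀ _ : Fin 2, ℝ) : Pi3) = Pi.single j L := by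
          funext m
          refine Fin.succAboveCases j ?_ ?_ m
          · simp
          · intro k; simp [Fin.insertNth_apply_succAbove,
              Pi.single_eq_of_ne (Fin.succAbove_ne j k)]
        have := Fin.insertNth_add (α := fun _ : Fin 3 => ℝ) j (a j) L x 0
        simp only [add_zero] at this
        rw [← h0, ← this]
        simp [ha, hb]
      have hpt : ∀ x : Fin 2 → ℝ, F j (j.insertNth (b j) x) = F j (j.insertNth (a j) x) := by
        intro x
        simp only [hF, if_pos rfl]
        rw [hins x, _root_.map_add, kappa_single]
        exact hfp _
      rw [setIntegral_congr_fun measurableSet_Icc (fun x _ => hpt x), sub_self]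
    · simp [hF, hj]
  rw [Finset.sum_congr rfl (fun j _ => hrhs j), Finset.sum_const_zero] at key
  have hL2 : (∫ y in Icc a b, D y (Pi.single i 1)) = 0 := by
    rw [← key]
    exact setIntegral_congr_fun measurableSet_Icc (fun y _ => (hsum y).symm)
  rw [setIntegral_box L (fun x => fderiv ℝ f x (e3 i))]
  rw [← hL2]
  refine setIntegral_congr_fun measurableSet_Icc (fun y _ => ?_)
  show fderiv ℝ f (κ y) (e3 i) = (fderiv ℝ f (κ y)).comp (κ : Pi3 →L[ℝ] E3) (Pi.single i 1)
  simp only [ContinuousLinearMap.comp_apply]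
  have hk : (κ : Pi3 →L[ℝ] E3) (Pi.single i 1) = e3 i := by
    rw [ContinuousLinearEquiv.coe_coe, kappa_single, one_smul]
  rw [hk]


open Set

lemma contDiff_coord {w : E3 → E3} (hw : ContDiff ℝ (⊤ : ℕ∞) w) (j : Fin 3) :
    ContDiff ℝ (⊤ : ℕ∞) (fun x => w x j) :=
  (EuclideanSpace.proj (𝕜 := ℝ) j).contDiff.comp hw

lemma cont_fderiv_apply {w : E3 → E3} (hw : ContDiff ℝ (⊤ : ℕ∞) w) (v : E3) (j : Fin 3) :
    Continuous (fun x => fderiv ℝ w x v j) := by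
  have h1 : Continuous fun x => fderiv ℝ w x := hw.continuous_fderiv (ENat.one_le_iff_ne_zero_withTop.mp hone)
  have h2 : Continuous fun x => fderiv ℝ w x v := h1.clm_apply continuous_const
  exact (EuclideanSpace.proj (𝕜 := ℝ) j).continuous.comp h2

lemma cont_triB_integrand {u v w : E3 → E3} (hu : ContDiff ℝ (⊤ : ℕ∞) u)
    (hv : ContDiff ℝ (⊤ : ℕ∞) v) (hw : ContDiff ℝ (⊤ : ℕ∞) w) :
    Continuous (fun x => ∑ i, ∑ j, u x i * fderiv ℝ v x (e3 i) j * w x j) := by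
  refine continuous_finset_sum _ fun i _ => continuous_finset_sum _ fun j _ => ?_
  exact (((contDiff_coord hu i).continuous.mul (cont_fderiv_apply hv (e3 i) j)).mul
    (contDiff_coord hw j).continuous)

lemma ibp (L : ℝ) (hL : 0 < L) {u ψ : E3 → E3}
    (hu : ContDiff ℝ (⊤ : ℕ∞) u) (hup : Periodic3 L u) (hud : divFree u)
    (hψ : ContDiff ℝ (⊤ : ℕ∞) ψ) (hψp : Periodic3 L ψ) :
    triB L u u ψ + triB L u ψ u = 0 := by
  classical
  set g : Fin 3 → E3 → ℝ := fun i x => (∑ j, u x j * ψ x j) * u x i with hg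
  have hgc : ∀ i, ContDiff ℝ (⊤ : ℕ∞) (g i) := fun i =>
    (ContDiff.sum fun j _ => (contDiff_coord hu j).mul (contDiff_coord hψ j)).mul
      (contDiff_coord hu i)
  have hgp : ∀ i x, g i (x + L • e3 i) = g i x := by
    intro i x
    simp only [hg, hup x i, hψp x i]
  have hzero : ∀ i, ∫ x in box L, fderiv ℝ (g i) x (e3 i) = 0 := fun i =>
    integral_pderiv_zero L hL (g i) (hgc i) i (hgp i)
  -- pointwise derivative identity
  have hptwise : ∀ x, (∑ i, fderiv ℝ (g i) x (e3 i)) =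
      (∑ i, ∑ j, u x i * fderiv ℝ u x (e3 i) j * ψ x j) +
      (∑ i, ∑ j, u x i * fderiv ℝ ψ x (e3 i) j * u x j) := by
    intro x
    have hu' : HasFDerivAt u (fderiv ℝ u x) x := (hu.differentiable (ENat.one_le_iff_ne_zero_withTop.mp hone) x).hasFDerivAt
    have hψ' : HasFDerivAt ψ (fderiv ℝ ψ x) x := (hψ.differentiable (ENat.one_le_iff_ne_zero_withTop.mp hone) x).hasFDerivAt
    set Du := fderiv ℝ u x
    set Dψ := fderiv ℝ ψ x
    set Dφ : E3 →L[ℝ] ℝ := ∑ j, (u x j • ((EuclideanSpace.proj (𝕜 := ℝ) j).comp Dψ)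
        + ψ x j • ((EuclideanSpace.proj (𝕜 := ℝ) j).comp Du)) with hDφ
    have hφ : HasFDerivAt (fun y => ∑ j, u y j * ψ y j) Dφ x := by
      refine HasFDerivAt.fun_sum fun j _ => ?_
      exact ((EuclideanSpace.proj (𝕜 := ℝ) j).hasFDerivAt.comp x hu').mul
        ((EuclideanSpace.proj (𝕜 := ℝ) j).hasFDerivAt.comp x hψ')
    have hgd : ∀ i, HasFDerivAt (g i)
        ((∑ j, u x j * ψ x j) • ((EuclideanSpace.proj (𝕜 := ℝ) i).comp Du)
          + u x i • Dφ) x := fun i =>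
      hφ.mul ((EuclideanSpace.proj (𝕜 := ℝ) i).hasFDerivAt.comp x hu')
    have hfd : ∀ i, fderiv ℝ (g i) x (e3 i) =
        (∑ j, u x j * ψ x j) * (Du (e3 i) i) + u x i * (Dφ (e3 i)) := by
      intro i
      rw [(hgd i).fderiv]
      simp [ContinuousLinearMap.add_apply, ContinuousLinearMap.smul_apply,
        ContinuousLinearMap.comp_apply, PiLp.proj_apply, smul_eq_mul]
    calc (∑ i, fderiv ℝ (g i) x (e3 i))
        = ∑ i, ((∑ j, u x j * ψ x j) * (Du (e3 i) i) + u x i * (Dφ (e3 i))) :=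
          Finset.sum_congr rfl fun i _ => hfd i
      _ = (∑ j, u x j * ψ x j) * (∑ i, Du (e3 i) i) + ∑ i, u x i * (Dφ (e3 i)) := by
          rw [Finset.sum_add_distrib, Finset.mul_sum]
      _ = ∑ i, u x i * (Dφ (e3 i)) := by rw [hud x, mul_zero, zero_add]
      _ = (∑ i, ∑ j, u x i * fderiv ℝ u x (e3 i) j * ψ x j) +
          (∑ i, ∑ j, u x i * fderiv ℝ ψ x (e3 i) j * u x j) := by
          rw [← Finset.sum_add_distrib]
          refine Finset.sum_congr rfl fun i _ => ?_
          simp only [hDφ, ContinuousLinearMap.sum_apply, ContinuousLinearMap.add_apply,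
            ContinuousLinearMap.smul_apply, ContinuousLinearMap.comp_apply,
            PiLp.proj_apply, smul_eq_mul]
          rw [← Finset.sum_add_distrib, Finset.mul_sum]
          exact Finset.sum_congr rfl fun j _ => by ring
  -- integrability
  have hi1 : IntegrableOn (fun x => ∑ i, ∑ j, u x i * fderiv ℝ u x (e3 i) j * ψ x j)
      (box L) := integrableOn_box L (cont_triB_integrand hu hu hψ)
  have hi2 : IntegrableOn (fun x => ∑ i, ∑ j, u x i * fderiv ℝ ψ x (e3 i) j * u x j)
      (box L) := integrableOn_box L (cont_triB_integrand hu hψ hu)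
  have hgint : ∀ i, IntegrableOn (fun x => fderiv ℝ (g i) x (e3 i)) (box L) := by
    intro i
    refine integrableOn_box L ?_
    have h1 : Continuous fun x => fderiv ℝ (g i) x := (hgc i).continuous_fderiv (ENat.one_le_iff_ne_zero_withTop.mp hone)
    exact h1.clm_apply continuous_const
  have hsum0 : (∫ x in box L, ∑ i, fderiv ℝ (g i) x (e3 i)) = 0 := by
    rw [integral_finset_sum _ (fun i _ => hgint i)]
    exact Finset.sum_eq_zero fun i _ => hzero i
  have : triB L u u ψ + triB L u ψ u
      = ∫ x in box L, ((∑ i, ∑ j, u x i * fderiv ℝ u x (e3 i) j * ψ x j) +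
        (∑ i, ∑ j, u x i * fderiv ℝ ψ x (e3 i) j * u x j)) := by
    rw [integral_add hi1 hi2]; rfl
  rw [this, ← hsum0]
  exact setIntegral_congr_fun (measurableSet_box L) (fun x _ => (hptwise x).symm)


open Set Real

lemma gradNormSq_nonneg (ψ : E3 → E3) (x : E3) : 0 ≤ gradNormSq ψ x :=
  Finset.sum_nonneg fun i _ => Finset.sum_nonneg fun j _ => sq_nonneg _

lemma cont_gradNormSq {ψ : E3 → E3} (hψ : ContDiff ℝ (⊤ : ℕ∞) ψ) :
    Continuous (gradNormSq ψ) := by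
  refine continuous_finset_sum _ fun i _ => continuous_finset_sum _ fun j _ => ?_
  exact (cont_fderiv_apply hψ (e3 i) j).pow 2

lemma abs_sum_mul_le (f g : Fin 3 → ℝ) :
    |∑ i, f i * g i| ≤ √(∑ i, f i ^ 2) * √(∑ i, g i ^ 2) := by
  rw [← Real.sqrt_sq_eq_abs, ← Real.sqrt_mul (Finset.sum_nonneg fun i _ => sq_nonneg _)]
  exact Real.sqrt_le_sqrt (Finset.sum_mul_sq_le_sq_mul_sq _ _ _)

lemma pointwise_bound (u ψ : E3 → E3) (x : E3) :
    |∑ i, ∑ j, u x i * fderiv ℝ ψ x (e3 i) j * u x j| ≤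
      ‖u x‖ ^ 2 * √(gradNormSq ψ x) := by
  have hnorm : ‖u x‖ = √(∑ j, (u x j) ^ 2) := by
    rw [EuclideanSpace.norm_eq]
    congr 1
    exact Finset.sum_congr rfl fun j _ => by rw [Real.norm_eq_abs, sq_abs]
  calc |∑ i, ∑ j, u x i * fderiv ℝ ψ x (e3 i) j * u x j|
      = |∑ i, u x i * (∑ j, fderiv ℝ ψ x (e3 i) j * u x j)| := by
        congr 1
        exact Finset.sum_congr rfl fun i _ => by
          rw [Finset.mul_sum]; exact Finset.sum_congr rfl fun j _ => by ring
    _ ≤ ∑ i, |u x i * (∑ j, fderiv ℝ ψ x (e3 i) j * u x j)| :=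
        Finset.abs_sum_le_sum_abs _ _
    _ ≤ ∑ i, |u x i| * (√(∑ j, (fderiv ℝ ψ x (e3 i) j) ^ 2) * √(∑ j, (u x j) ^ 2)) := by
        refine Finset.sum_le_sum fun i _ => ?_
        rw [abs_mul]
        exact mul_le_mul_of_nonneg_left (abs_sum_mul_le _ _) (abs_nonneg _)
    _ = (∑ i, |u x i| * √(∑ j, (fderiv ℝ ψ x (e3 i) j) ^ 2)) * √(∑ j, (u x j) ^ 2) := by
        rw [Finset.sum_mul]
        exact Finset.sum_congr rfl fun i _ => by ring
    _ ≤ (√(∑ i, |u x i| ^ 2) * √(∑ i, (√(∑ j, (fderiv ℝ ψ x (e3 i) j) ^ 2)) ^ 2))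
          * √(∑ j, (u x j) ^ 2) := by
        refine mul_le_mul_of_nonneg_right ?_ (Real.sqrt_nonneg _)
        exact Real.sum_mul_le_sqrt_mul_sqrt _ _ _
    _ = ‖u x‖ ^ 2 * √(gradNormSq ψ x) := by
        have h1 : (∑ i, |u x i| ^ 2) = ∑ j, (u x j) ^ 2 :=
          Finset.sum_congr rfl fun i _ => sq_abs _
        have h2 : (∑ i, (√(∑ j, (fderiv ℝ ψ x (e3 i) j) ^ 2)) ^ 2) = gradNormSq ψ x :=
          Finset.sum_congr rfl fun i _ =>
            Real.sq_sqrt (Finset.sum_nonneg fun j _ => sq_nonneg _)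
        rw [h1, h2, hnorm]
        ring

open Set Real

lemma rpow_sq_eq {t : ℝ} (ht : 0 ≤ t) : ((t ^ (2:ℕ) : ℝ)) ^ (2:ℝ) = t ^ (4:ℝ) := by
  rw [← Real.rpow_natCast t 2, ← Real.rpow_mul ht]
  norm_num

lemma interp (L r : ℝ) (hr : 3 ≤ r) {u : E3 → E3} (hu : ContDiff ℝ (⊤ : ℕ∞) u) :
    (∫ x in box L, ‖u x‖ ^ (4:ℝ)) ^ ((1:ℝ)/2)
      ≤ LpNorm L (r + 1) u ^ ((r + 1) / (r - 1)) * LpNorm L 2 u ^ ((r - 3) / (r - 1)) := by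
  have hA0 : 0 ≤ ∫ x in box L, ‖u x‖ ^ (r + 1) :=
    setIntegral_nonneg (measurableSet_box L) fun x _ => Real.rpow_nonneg (norm_nonneg _) _
  have hB0 : 0 ≤ ∫ x in box L, ‖u x‖ ^ (2:ℝ) :=
    setIntegral_nonneg (measurableSet_box L) fun x _ => Real.rpow_nonneg (norm_nonneg _) _
  have hJ0 : 0 ≤ ∫ x in box L, ‖u x‖ ^ (4:ℝ) :=
    setIntegral_nonneg (measurableSet_box L) fun x _ => Real.rpow_nonneg (norm_nonneg _) _
  rcases eq_or_lt_of_le hr with heq | hlt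
  · -- r = 3
    subst heq
    have h4 : (∫ x in box L, ‖u x‖ ^ ((3:ℝ) + 1)) = ∫ x in box L, ‖u x‖ ^ (4:ℝ) := by
      norm_num
    rw [LpNorm, LpNorm, h4]
    rw [show ((3:ℝ) - 3) / ((3:ℝ) - 1) = 0 by norm_num, Real.rpow_zero, mul_one]
    rw [← Real.rpow_mul hJ0]
    norm_num
  · -- r > 3
    have hr1 : (0:ℝ) < r - 1 := by linarith
    have hr3 : (0:ℝ) < r - 3 := by linarith
    have hrp1 : (0:ℝ) < r + 1 := by linarith
    set p : ℝ := (r - 1) / 2 with hp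
    set q : ℝ := (r - 1) / (r - 3) with hq
    have conj : Real.HolderConjugate p q := by
      rw [Real.holderConjugate_iff]
      constructor
      · rw [hp, lt_div_iff₀ two_pos]; linarith
      · rw [hp, hq]; rw [inv_div, inv_div]
        rw [← add_div, div_eq_one_iff_eq (ne_of_gt hr1)]
        ring
    set a : ℝ := 2 * (r + 1) / (r - 1) with haa
    set bb : ℝ := 2 * (r - 3) / (r - 1) with hbb
    have ha0 : 0 ≤ a := by positivity
    have hb0 : 0 ≤ bb := by positivity
    have hab4 : a + bb = 4 := by rw [haa, hbb]; field_simp; ring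
    have hap : a * p = r + 1 := by rw [haa, hp]; field_simp
    have hbq : bb * q = 2 := by rw [hbb, hq]; field_simp
    have hfc : Continuous fun x => ‖u x‖ ^ a :=
      hu.continuous.norm.rpow_const fun x => Or.inr ha0
    have hgc : Continuous fun x => ‖u x‖ ^ bb :=
      hu.continuous.norm.rpow_const fun x => Or.inr hb0
    have h := integral_mul_le_Lp_mul_Lq_of_nonneg (μ := volume.restrict (box L)) conj
        (f := fun x => ‖u x‖ ^ a) (g := fun x => ‖u x‖ ^ bb)
        (Filter.Eventually.of_forall fun x => Real.rpow_nonneg (norm_nonneg _) _)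
        (Filter.Eventually.of_forall fun x => Real.rpow_nonneg (norm_nonneg _) _)
        (memLp_box L hfc _) (memLp_box L hgc _)
    have e1 : (∫ x in box L, ‖u x‖ ^ a * ‖u x‖ ^ bb) = ∫ x in box L, ‖u x‖ ^ (4:ℝ) := by
      refine setIntegral_congr_fun (measurableSet_box L) fun x _ => ?_
      rw [← Real.rpow_add' (norm_nonneg _) (by rw [hab4]; norm_num), hab4]
    have e2 : (∫ x in box L, (‖u x‖ ^ a) ^ p) = ∫ x in box L, ‖u x‖ ^ (r + 1) := by
      refine setIntegral_congr_fun (measurableSet_box L) fun x _ => ?_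
      rw [← Real.rpow_mul (norm_nonneg _), hap]
    have e3 : (∫ x in box L, (‖u x‖ ^ bb) ^ q) = ∫ x in box L, ‖u x‖ ^ (2:ℝ) := by
      refine setIntegral_congr_fun (measurableSet_box L) fun x _ => ?_
      rw [← Real.rpow_mul (norm_nonneg _), hbq]
    rw [e1, e2, e3] at h
    have h1p : 1 / p = 2 / (r - 1) := by rw [hp, one_div, inv_div]
    have h1q : 1 / q = (r - 3) / (r - 1) := by rw [hq, one_div, inv_div]
    rw [h1p, h1q] at h
    have h5 := Real.rpow_le_rpow hJ0 h (by norm_num : (0:ℝ) ≤ 1/2)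
    refine h5.trans (le_of_eq ?_)
    rw [Real.mul_rpow (Real.rpow_nonneg hA0 _) (Real.rpow_nonneg hB0 _)]
    rw [← Real.rpow_mul hA0, ← Real.rpow_mul hB0]
    rw [LpNorm, LpNorm, ← Real.rpow_mul hA0, ← Real.rpow_mul hB0]
    congr 1
    · congr 1
      field_simp
    · congr 1
      ring
end Stmt17Aux

open Stmt17Aux

/-- For `r ≥ 3`, `‖B(u)‖_{V'+L^{(r+1)/r}} ≤
‖u‖_{L^{r+1}}^{(r+1)/(r-1)} ‖u‖_{L²}^{(r-3)/(r-1)}`, where the dual norm is the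
supremum of `|⟨B(u),ψ⟩| = |b(u,u,ψ)|` over test fields `ψ ∈ V ∩ L^{r+1}` with
`‖ψ‖_V + ‖ψ‖_{L^{r+1}} ≤ 1`. -/
theorem stmt17 (L r : ℝ) (hL : 0 < L) (hr : 3 ≤ r)
    (u : E3 → E3)
    (hu : ContDiff ℝ (⊤ : ℕ∞) u) (hup : Periodic3 L u) (hud : divFree u) :
    ∀ ψ : E3 → E3, ContDiff ℝ (⊤ : ℕ∞) ψ → Periodic3 L ψ → divFree ψ →
      Vnorm L ψ + LpNorm L (r + 1) ψ ≤ 1 →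
      |triB L u u ψ|
        ≤ LpNorm L (r + 1) u ^ ((r + 1) / (r - 1))
          * LpNorm L 2 u ^ ((r - 3) / (r - 1)) := by
  intro ψ hψ hψp hψd hψle
  have hLp0 : 0 ≤ LpNorm L (r + 1) ψ :=
    Real.rpow_nonneg (MeasureTheory.setIntegral_nonneg (measurableSet_box L)
      fun x _ => Real.rpow_nonneg (norm_nonneg _) _) _
  have hV1 : Vnorm L ψ ≤ 1 := by linarith
  have hJ0 : 0 ≤ ∫ x in box L, ‖u x‖ ^ (4:ℝ) :=
    MeasureTheory.setIntegral_nonneg (measurableSet_box L)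
      fun x _ => Real.rpow_nonneg (norm_nonneg _) _
  -- Step 1: integration by parts
  have hibp := ibp L hL hu hup hud hψ hψp
  have h1 : |triB L u u ψ| = |triB L u ψ u| := by
    have h : triB L u u ψ = -triB L u ψ u := by linarith
    rw [h, abs_neg]
  -- Step 2: pointwise bound
  have hcont2 : Continuous (fun x => ‖u x‖ ^ (2:ℕ) * Real.sqrt (gradNormSq ψ x)) :=
    (hu.continuous.norm.pow 2).mul (Real.continuous_sqrt.comp (cont_gradNormSq hψ))
  have h2 : |triB L u ψ u| ≤ ∫ x in box L, ‖u x‖ ^ (2:ℕ) * Real.sqrt (gradNormSq ψ x) := by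
    have habs : |triB L u ψ u| ≤
        ∫ x in box L, |∑ i, ∑ j, u x i * fderiv ℝ ψ x (e3 i) j * u x j| := by
      have hn := MeasureTheory.norm_integral_le_integral_norm
        (μ := MeasureTheory.volume.restrict (box L))
        (fun x => ∑ i, ∑ j, u x i * fderiv ℝ ψ x (e3 i) j * u x j)
      simpa [Real.norm_eq_abs, triB] using hn
    refine habs.trans (MeasureTheory.integral_mono ?_ ?_ ?_)
    · exact integrableOn_box L (cont_triB_integrand hu hψ hu).abs
    · exact integrableOn_box L hcont2
    · exact fun x => pointwise_bound u ψ x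
  -- Step 3: Cauchy-Schwarz (Hölder with p = q = 2)
  have conj22 : Real.HolderConjugate 2 2 := Real.holderConjugate_iff.mpr ⟨one_lt_two, by norm_num⟩
  have h3 := MeasureTheory.integral_mul_le_Lp_mul_Lq_of_nonneg
      (μ := MeasureTheory.volume.restrict (box L)) conj22
      (f := fun x => ‖u x‖ ^ (2:ℕ)) (g := fun x => Real.sqrt (gradNormSq ψ x))
      (Filter.Eventually.of_forall fun x => by positivity)
      (Filter.Eventually.of_forall fun x => Real.sqrt_nonneg _)
      (memLp_box L (hu.continuous.norm.pow 2) _)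
      (memLp_box L (Real.continuous_sqrt.comp (cont_gradNormSq hψ)) _)
  have e1 : (∫ x in box L, ((‖u x‖ ^ (2:ℕ) : ℝ)) ^ (2:ℝ)) = ∫ x in box L, ‖u x‖ ^ (4:ℝ) :=
    MeasureTheory.setIntegral_congr_fun (measurableSet_box L)
      fun x _ => rpow_sq_eq (norm_nonneg _)
  have e2 : (∫ x in box L, (Real.sqrt (gradNormSq ψ x)) ^ (2:ℝ)) = VnormSq L ψ :=
    MeasureTheory.setIntegral_congr_fun (measurableSet_box L) fun x _ => by
      rw [show ((2:ℝ)) = ((2:ℕ):ℝ) from by norm_num, Real.rpow_natCast,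
        Real.sq_sqrt (gradNormSq_nonneg ψ x)]
  rw [e1, e2] at h3
  have h4 : |triB L u u ψ| ≤ (∫ x in box L, ‖u x‖ ^ (4:ℝ)) ^ ((1:ℝ)/2) * Vnorm L ψ := by
    rw [h1]
    refine h2.trans (h3.trans (le_of_eq ?_))
    rw [Vnorm, Real.sqrt_eq_rpow]
  calc |triB L u u ψ|
      ≤ (∫ x in box L, ‖u x‖ ^ (4:ℝ)) ^ ((1:ℝ)/2) * Vnorm L ψ := h4
    _ ≤ (∫ x in box L, ‖u x‖ ^ (4:ℝ)) ^ ((1:ℝ)/2) * 1 :=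
        mul_le_mul_of_nonneg_left hV1 (Real.rpow_nonneg hJ0 _)
    _ = (∫ x in box L, ‖u x‖ ^ (4:ℝ)) ^ ((1:ℝ)/2) := mul_one _
    _ ≤ LpNorm L (r + 1) u ^ ((r + 1) / (r - 1)) * LpNorm L 2 u ^ ((r - 3) / (r - 1)) :=
        interp L r hr hu
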